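/- There exists a unique α_cr > 2.5 such that for α > α_cr the cubic ξ^3 - α ξ^2 - 2ξ + α^2 + α has exactly two roots in (2, ∞), for α = α_cr it has exactly one root in (2, ∞), and for 1 < α < α_cr it has no roots in (2, ∞). -/

import Mathlib

open Set
noncomputable def ss (α : ℝ) : ℝ := Real.sqrt (α^2 + 6)
noncomputable def xx (α : ℝ) : ℝ := (α + ss α) / 3
def fp (α ξ : ℝ) : ℝ := ξ^3 - α*ξ^2 - 2*ξ + α^2 + α
def DD (α : ℝ) : ℝ := 4*α^5 - 23*α^4 - 18*α^3 + 13*α^2 + 32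

lemma ss_sq (α : ℝ) : (ss α)^2 = α^2 + 6 := Real.sq_sqrt (by positivity)
lemma ss_pos (α : ℝ) : 0 < ss α := Real.sqrt_pos.2 (by positivity)
lemma ss_gt (α : ℝ) (h : 0 ≤ α) : α < ss α := by nlinarith [ss_sq α, ss_pos α]

lemma fp_deriv (α x : ℝ) : HasDerivAt (fp α) (3*x^2 - 2*α*x - 2) x := by
  have h := ((((hasDerivAt_pow 3 x).sub ((hasDerivAt_pow 2 x).const_mul α)).sub
    ((hasDerivAt_id' x).const_mul 2)).add_const (α^2)).add_const α
  refine h.congr_deriv ?_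
  norm_num; ring

lemma fp_cont (α : ℝ) : Continuous (fp α) := by unfold fp; continuity

lemma fp_xx (α : ℝ) : fp α (xx α) = ((-2*α^3+27*α^2+9*α) - (2*α^2+12) * ss α)/27 := by
  have h := ss_sq α
  have h3 : ss α ^ 3 = (α^2+6) * ss α := by rw [pow_succ, h]
  unfold fp xx
  linear_combination (1/27 : ℝ) * h3

lemma xx_gt2 (α : ℝ) (hα : 2.5 < α) : 2 < xx α := by
  have h := ss_sq α; have h2 := ss_pos α
  unfold xx
  nlinarith [sq_nonneg (ss α + α - 6)]

lemma xx_lt (α : ℝ) (hα : 2.5 < α) : xx α < α + 2 := by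
  have h := ss_sq α; have h2 := ss_pos α
  unfold xx
  nlinarith [sq_nonneg (ss α - α - 2)]

lemma fp_anti (α : ℝ) (hα : 2.5 < α) : StrictAntiOn (fp α) (Icc 2 (xx α)) := by
  apply strictAntiOn_of_deriv_neg (convex_Icc _ _) (fp_cont α).continuousOn
  intro x hx
  rw [interior_Icc] at hx
  rw [(fp_deriv α x).deriv]
  have hs := ss_gt α (by linarith)
  have hA : 0 < α + ss α - 3*x := by
    have := hx.2; unfold xx at this; linarith
  have hB : 0 < 3*x - α + ss α := by linarith [hx.1]
  nlinarith [mul_pos hA hB, ss_sq α]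

lemma fp_mono (α : ℝ) (hα : 2.5 < α) : StrictMonoOn (fp α) (Ici (xx α)) := by
  apply strictMonoOn_of_deriv_pos (convex_Ici _) (fp_cont α).continuousOn
  intro x hx
  rw [interior_Ici] at hx
  rw [(fp_deriv α x).deriv]
  have hs := ss_gt α (by linarith)
  have h2 := xx_gt2 α hα
  have hA : 0 < 3*x - α - ss α := by
    have : xx α < x := hx; unfold xx at this; linarith
  have hB : 0 < 3*x - α + ss α := by nlinarith
  nlinarith [mul_pos hA hB, ss_sq α]

lemma fp_two_pos (α : ℝ) : 0 < fp α 2 := by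
  unfold fp; nlinarith [sq_nonneg (2*α - 3)]

lemma fp_end_pos (α : ℝ) (hα : 2.5 < α) : 0 < fp α (α + 2) := by
  have : fp α (α+2) = 3*α^2 + 7*α + 4 := by unfold fp; ring
  rw [this]; nlinarith

lemma key_identity (α : ℝ) :
    ((2*α^2+12) * ss α)^2 - (-2*α^3+27*α^2+9*α)^2 = 27 * DD α := by
  have h := ss_sq α
  unfold DD
  linear_combination (2*α^2+12)^2 * h

lemma m_neg (α : ℝ) (hD : 0 < DD α) : fp α (xx α) < 0 := by
  rw [fp_xx]
  have h := key_identity α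
  have hs := ss_pos α
  have hA : 0 < (2*α^2+12) * ss α := by positivity
  rcases le_or_gt (-2*α^3+27*α^2+9*α) 0 with hR | hR
  · nlinarith
  · have h1 : (-2*α^3+27*α^2+9*α)^2 < ((2*α^2+12) * ss α)^2 := by nlinarith
    have := lt_of_pow_lt_pow_left₀ 2 (le_of_lt hA) h1
    linarith

lemma R_pos (α : ℝ) (h1 : 2.5 < α) (h2 : α < 7) : 0 < -2*α^3+27*α^2+9*α := by
  nlinarith [mul_pos (show (0:ℝ) < α - 2.5 by linarith) (show (0:ℝ) < 7 - α by linarith),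
    mul_pos (show (0:ℝ) < α by linarith) (mul_pos (show (0:ℝ) < α - 2.5 by linarith) (show (0:ℝ) < 7 - α by linarith))]

lemma m_zero (α : ℝ) (hD : DD α = 0) (h1 : 6 < α) (h2 : α < 7) : fp α (xx α) = 0 := by
  rw [fp_xx]
  have h := key_identity α
  have hs := ss_pos α
  have hA : 0 < (2*α^2+12) * ss α := by positivity
  have hR : 0 < -2*α^3+27*α^2+9*α := R_pos α (by linarith) h2
  have hz : ((2*α^2+12) * ss α - (-2*α^3+27*α^2+9*α)) * ((2*α^2+12) * ss α + (-2*α^3+27*α^2+9*α)) = 0 := by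
    rw [hD] at h; nlinarith
  rcases mul_eq_zero.1 hz with h' | h'
  · linarith
  · linarith

lemma m_pos (α : ℝ) (hD : DD α < 0) (h1 : 2.5 < α) (h2 : α < 7) : 0 < fp α (xx α) := by
  rw [fp_xx]
  have h := key_identity α
  have hs := ss_pos α
  have hA : 0 < (2*α^2+12) * ss α := by positivity
  have hR : 0 < -2*α^3+27*α^2+9*α := R_pos α h1 h2
  have h1' : ((2*α^2+12) * ss α)^2 < (-2*α^3+27*α^2+9*α)^2 := by nlinarith
  have := lt_of_pow_lt_pow_left₀ 2 (le_of_lt hR) h1'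
  linarith

lemma count_two (α : ℝ) (hα : 2.5 < α) (hm : fp α (xx α) < 0) :
    {ξ : ℝ | ξ > 2 ∧ fp α ξ = 0}.ncard = 2 := by
  have hx2 := xx_gt2 α hα
  have hxe := xx_lt α hα
  have h2 := fp_two_pos α
  have he := fp_end_pos α hα
  obtain ⟨r1, hr1m, hr1⟩ : ∃ r1 ∈ Icc 2 (xx α), fp α r1 = 0 := by
    have := intermediate_value_Icc' (le_of_lt hx2) (fp_cont α).continuousOn
    exact this ⟨le_of_lt hm, le_of_lt h2⟩
  obtain ⟨r2, hr2m, hr2⟩ : ∃ r2 ∈ Icc (xx α) (α+2), fp α r2 = 0 := by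
    have := intermediate_value_Icc (le_of_lt hxe) (fp_cont α).continuousOn
    exact this ⟨le_of_lt hm, le_of_lt he⟩
  have hr1a : 2 < r1 := lt_of_le_of_ne hr1m.1 (by rintro rfl; linarith)
  have hr1b : r1 < xx α := lt_of_le_of_ne hr1m.2 (by rintro rfl; linarith)
  have hr2a : xx α < r2 := lt_of_le_of_ne hr2m.1 (by rintro rfl; linarith)
  have hset : {ξ : ℝ | ξ > 2 ∧ fp α ξ = 0} = {r1, r2} := by
    ext ξ
    simp only [mem_setOf_eq, mem_insert_iff, mem_singleton_iff]
    constructor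
    · rintro ⟨hξ2, hξ0⟩
      rcases le_or_gt ξ (xx α) with hle | hlt
      · left
        exact (fp_anti α hα).injOn ⟨le_of_lt hξ2, hle⟩ ⟨hr1m.1, hr1m.2⟩ (hξ0.trans hr1.symm)
      · right
        exact (fp_mono α hα).injOn (le_of_lt hlt) hr2m.1 (hξ0.trans hr2.symm)
    · rintro (rfl | rfl)
      · exact ⟨hr1a, hr1⟩
      · exact ⟨lt_trans hx2 hr2a, hr2⟩
  rw [hset, Set.ncard_pair (by intro h; rw [h] at hr1b; linarith)]

lemma count_one (α : ℝ) (hα : 2.5 < α) (hm : fp α (xx α) = 0) :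
    {ξ : ℝ | ξ > 2 ∧ fp α ξ = 0}.ncard = 1 := by
  have hx2 := xx_gt2 α hα
  have hset : {ξ : ℝ | ξ > 2 ∧ fp α ξ = 0} = {xx α} := by
    ext ξ
    simp only [mem_setOf_eq, mem_singleton_iff]
    constructor
    · rintro ⟨hξ2, hξ0⟩
      rcases le_or_gt ξ (xx α) with hle | hlt
      · exact (fp_anti α hα).injOn ⟨le_of_lt hξ2, hle⟩ ⟨le_of_lt hx2, le_refl _⟩ (hξ0.trans hm.symm)
      · exact (fp_mono α hα).injOn (le_of_lt hlt) (Set.mem_Ici.2 le_rfl) (hξ0.trans hm.symm)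
    · rintro rfl
      exact ⟨hx2, hm⟩
  rw [hset, Set.ncard_singleton]

lemma count_zero (α : ℝ) (hα : 2.5 < α) (hm : 0 < fp α (xx α)) :
    {ξ : ℝ | ξ > 2 ∧ fp α ξ = 0} = ∅ := by
  have hx2 := xx_gt2 α hα
  ext ξ
  simp only [mem_setOf_eq, mem_empty_iff_false, iff_false, not_and]
  intro hξ2 hξ0
  rcases lt_trichotomy ξ (xx α) with hlt | heq | hgt
  · have := (fp_anti α hα) (show ξ ∈ Icc 2 (xx α) from ⟨le_of_lt hξ2, le_of_lt hlt⟩)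
      (show xx α ∈ Icc 2 (xx α) from ⟨le_of_lt hx2, le_refl _⟩) hlt
    linarith
  · rw [heq] at hξ0; linarith
  · have := (fp_mono α hα) (show xx α ∈ Ici (xx α) from Set.mem_Ici.2 le_rfl)
      (show ξ ∈ Ici (xx α) from le_of_lt hgt) hgt
    linarith

lemma count_zero_small (α : ℝ) (h1 : 1 < α) (h2 : α ≤ 2.5) :
    {ξ : ℝ | ξ > 2 ∧ fp α ξ = 0} = ∅ := by
  have hmono : StrictMonoOn (fp α) (Ici 2) := by
    apply strictMonoOn_of_deriv_pos (convex_Ici _) (fp_cont α).continuousOn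
    intro x hx
    rw [interior_Ici] at hx
    rw [(fp_deriv α x).deriv]
    have hx2 : (2:ℝ) < x := hx
    nlinarith [mul_pos (show (0:ℝ) < 3*x+1 by linarith) (show (0:ℝ) < x - 2 by linarith),
      mul_nonneg (show (0:ℝ) ≤ 5 - 2*α by linarith) (show (0:ℝ) ≤ x by linarith)]
  ext ξ
  simp only [mem_setOf_eq, mem_empty_iff_false, iff_false, not_and]
  intro hξ2 hξ0
  have := hmono (show (2:ℝ) ∈ Ici (2:ℝ) from Set.mem_Ici.2 le_rfl) (show ξ ∈ Ici (2:ℝ) from le_of_lt hξ2) hξ2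
  have h2p := fp_two_pos α
  linarith

lemma DD_deriv (x : ℝ) : HasDerivAt DD (20*x^4 - 92*x^3 - 54*x^2 + 26*x) x := by
  have h := (((((hasDerivAt_pow 5 x).const_mul 4).sub ((hasDerivAt_pow 4 x).const_mul 23)).sub
    ((hasDerivAt_pow 3 x).const_mul 18)).add ((hasDerivAt_pow 2 x).const_mul 13)).add_const 32
  refine h.congr_deriv ?_
  norm_num; ring

lemma DD_cont : Continuous DD := by unfold DD; continuity

lemma DD_mono : StrictMonoOn DD (Ici 6) := by
  apply strictMonoOn_of_deriv_pos (convex_Ici _) DD_cont.continuousOn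
  intro x hx
  rw [interior_Ici] at hx
  rw [(DD_deriv x).deriv]
  have hx6 : (6:ℝ) < x := hx
  nlinarith [mul_pos (mul_pos (show (0:ℝ) < x by linarith) (show (0:ℝ) < x by linarith)) (mul_pos (show (0:ℝ) < x by linarith) (show (0:ℝ) < x - 6 by linarith)),
    mul_pos (mul_pos (show (0:ℝ) < x by linarith) (show (0:ℝ) < x by linarith)) (show (0:ℝ) < x by linarith),
    mul_pos (show (0:ℝ) < x by linarith) (show (0:ℝ) < x by linarith)]

lemma DD_neg_mid (α : ℝ) (h1 : 2.5 < α) (h2 : α ≤ 6) : DD α < 0 := by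
  unfold DD
  nlinarith [mul_nonneg (show (0:ℝ) ≤ α - 2.5 by linarith) (show (0:ℝ) ≤ 6 - α by linarith),
    mul_nonneg (mul_nonneg (show (0:ℝ) ≤ α - 2.5 by linarith) (show (0:ℝ) ≤ 6 - α by linarith)) (show (0:ℝ) ≤ α by linarith),
    mul_nonneg (mul_nonneg (mul_nonneg (show (0:ℝ) ≤ α - 2.5 by linarith) (show (0:ℝ) ≤ 6 - α by linarith)) (show (0:ℝ) ≤ α by linarith)) (show (0:ℝ) ≤ α by linarith),
    mul_nonneg (mul_nonneg (show (0:ℝ) ≤ α - 2.5 by linarith) (show (0:ℝ) ≤ α - 2.5 by linarith)) (show (0:ℝ) ≤ 6 - α by linarith),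
    sq_nonneg (α - 5), sq_nonneg (α - 4)]

lemma exists_root : ∃ c, 6 < c ∧ c < 7 ∧ DD c = 0 := by
  obtain ⟨c, hcm, hc0⟩ : ∃ c ∈ Icc (6:ℝ) 7, DD c = (0:ℝ) := by
    have h := intermediate_value_Icc (show (6:ℝ) ≤ 7 by norm_num) DD_cont.continuousOn
    have h0 : (0:ℝ) ∈ Icc (DD 6) (DD 7) := by
      constructor <;> norm_num [DD]
    exact h h0
  refine ⟨c, ?_, ?_, hc0⟩
  · rcases lt_or_eq_of_le hcm.1 with h | h
    · exact h
    · exfalso; rw [← h] at hc0; norm_num [DD] at hc0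
  · rcases lt_or_eq_of_le hcm.2 with h | h
    · exact h
    · exfalso; rw [h] at hc0; norm_num [DD] at hc0

theorem stmt_8 :
    ∃! αcr : ℝ, αcr > 2.5 ∧
      (∀ α : ℝ, α > αcr →
        {ξ : ℝ | ξ > 2 ∧ ξ^3 - α*ξ^2 - 2*ξ + α^2 + α = 0}.ncard = 2) ∧
      ({ξ : ℝ | ξ > 2 ∧ ξ^3 - αcr*ξ^2 - 2*ξ + αcr^2 + αcr = 0}.ncard = 1) ∧
      (∀ α : ℝ, 1 < α → α < αcr →
        {ξ : ℝ | ξ > 2 ∧ ξ^3 - α*ξ^2 - 2*ξ + α^2 + α = 0} = ∅) := by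
  obtain ⟨c, hc6, hc7, hc0⟩ := exists_root
  have hsets : ∀ α : ℝ, {ξ : ℝ | ξ > 2 ∧ ξ^3 - α*ξ^2 - 2*ξ + α^2 + α = 0}
      = {ξ : ℝ | ξ > 2 ∧ fp α ξ = 0} := fun α => rfl
  have prop2 : ∀ α : ℝ, α > c →
      {ξ : ℝ | ξ > 2 ∧ ξ^3 - α*ξ^2 - 2*ξ + α^2 + α = 0}.ncard = 2 := by
    intro α hαc
    rw [hsets]
    have hD : 0 < DD α := by
      have := DD_mono (show c ∈ Ici (6:ℝ) from le_of_lt hc6)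
        (show α ∈ Ici (6:ℝ) from by simp; linarith) hαc
      linarith
    exact count_two α (by norm_num; linarith) (m_neg α hD)
  have prop3 : {ξ : ℝ | ξ > 2 ∧ ξ^3 - c*ξ^2 - 2*ξ + c^2 + c = 0}.ncard = 1 := by
    rw [hsets]
    exact count_one c (by norm_num; linarith) (m_zero c hc0 hc6 hc7)
  have prop4 : ∀ α : ℝ, 1 < α → α < c →
      {ξ : ℝ | ξ > 2 ∧ ξ^3 - α*ξ^2 - 2*ξ + α^2 + α = 0} = ∅ := by
    intro α h1 h2
    rw [hsets]
    rcases le_or_gt α 2.5 with h | h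
    · exact count_zero_small α h1 h
    · have hD : DD α < 0 := by
        rcases le_or_gt α 6 with h6 | h6
        · exact DD_neg_mid α h h6
        · have := DD_mono (show α ∈ Ici (6:ℝ) from le_of_lt h6)
            (show c ∈ Ici (6:ℝ) from le_of_lt hc6) h2
          linarith
      exact count_zero α h (m_pos α hD h (by linarith))
  refine ⟨c, ⟨by norm_num; linarith, prop2, prop3, prop4⟩, ?_⟩
  rintro y ⟨hy25, hy2, hy1, hy0⟩
  rcases lt_trichotomy y c with h | h | h
  · exfalso
    have := prop4 y (by norm_num at hy25 ⊢; linarith) h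
    rw [this] at hy1
    simp at hy1
  · exact h
  · exfalso
    have := prop2 y h
    rw [this] at hy1
    norm_num at hy1
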